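/- There exist constants C > 0 and ρ ∈ (0,1) such that for every y ∈ {−1,1}^{ℤ₊} and every n ≥ 1, | Z_{0,n}(y_0,…,y_n)/(λ·Z_{1,n}(y_1,…,y_n)) − g(y) | ≤ C·ρⁿ, where g(y) = (1/λ)·cosh(w_0(y))·exp(B(w_1(y)))/cosh(w_1(y)); i.e., the conditional probabilities Q(y_0 | y_1,…,y_n) converge uniformly and exponentially fast to the continuous positive function g, so Q is a g-measure. -/

import Mathlib

open Finset

set_option maxHeartbeats 1000000


noncomputable def Vaux (A : ℝ → ℝ) (f : ℕ → ℝ) : ℕ → ℕ → ℝ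
  | 0, _ => 0
  | (k+1), i => f i + A (Vaux A f k (i+1))

noncomputable def Vf (A : ℝ → ℝ) (f : ℕ → ℝ) (n i : ℕ) : ℝ := Vaux A f (n + 1 - i) i

lemma Vf_gt {A : ℝ → ℝ} {f : ℕ → ℝ} {n i : ℕ} (h : n < i) : Vf A f n i = 0 := by
  have : n + 1 - i = 0 := by omega
  rw [Vf, this]; rfl

lemma Vf_le {A : ℝ → ℝ} {f : ℕ → ℝ} {n i : ℕ} (h : i ≤ n) :
    Vf A f n i = f i + A (Vf A f n (i + 1)) := by
  have h1 : n + 1 - i = (n - i) + 1 := by omega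
  have h2 : n + 1 - (i + 1) = n - i := by omega
  rw [Vf, h1, Vf, h2]; rfl

lemma Vf_top {A : ℝ → ℝ} {f : ℕ → ℝ} {n : ℕ} (hA0 : A 0 = 0) : Vf A f n n = f n := by
  rw [Vf_le le_rfl, Vf_gt (Nat.lt_succ_self n), hA0, add_zero]

/-- Vf with field updated at position n equals Vf for n+1. -/
lemma Vf_update {A : ℝ → ℝ} (hA0 : A 0 = 0) (f : ℕ → ℝ) (n : ℕ) :
    ∀ k i, n ≤ i + k → i ≤ n →
      Vf A (fun j => if j = n then f n + A (f (n+1)) else f j) n i = Vf A f (n+1) i := by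
  intro k
  induction k with
  | zero =>
    intro i h1 h2
    have : i = n := by omega
    subst this
    rw [Vf_top hA0, Vf_le (by omega), if_pos rfl, Vf_top hA0]
  | succ k ih =>
    intro i h1 h2
    rcases eq_or_lt_of_le h2 with h | h
    · subst h
      rw [Vf_top hA0, Vf_le (by omega), if_pos rfl, Vf_top hA0]
    · rw [Vf_le (show i ≤ n by omega), if_neg (by omega), ih (i+1) (by omega) (by omega),
        Vf_le (show i ≤ n + 1 by omega)]

section KeyId

variable {J : ℝ} {A B : ℝ → ℝ}

lemma hA0 (hA : ∀ u, A u = (1/2) * Real.log (Real.cosh (u + J) / Real.cosh (u - J))) :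
    A 0 = 0 := by
  have := hA 0
  simp only [zero_add, zero_sub, Real.cosh_neg] at this
  rw [this, div_self (ne_of_gt (Real.cosh_pos _)), Real.log_one, mul_zero]

lemma key2cosh
    (hA : ∀ u, A u = (1/2) * Real.log (Real.cosh (u + J) / Real.cosh (u - J)))
    (hB : ∀ u, B u = (1/2) * Real.log (4 * Real.cosh (u + J) * Real.cosh (u - J)))
    (s w : ℝ) (hs : s = 1 ∨ s = -1) :
    2 * Real.cosh (J * s + w) = Real.exp (A w * s + B w) := by
  have c1 : (0:ℝ) < Real.cosh (w + J) := Real.cosh_pos _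
  have c2 : (0:ℝ) < Real.cosh (w - J) := Real.cosh_pos _
  have hlog : Real.log (Real.cosh (w+J) / Real.cosh (w-J))
      = Real.log (Real.cosh (w+J)) - Real.log (Real.cosh (w-J)) :=
    Real.log_div (ne_of_gt c1) (ne_of_gt c2)
  have hlog2 : Real.log (4 * Real.cosh (w+J) * Real.cosh (w-J))
      = Real.log 4 + Real.log (Real.cosh (w+J)) + Real.log (Real.cosh (w-J)) := by
    rw [Real.log_mul (by positivity) (ne_of_gt c2), Real.log_mul (by norm_num) (ne_of_gt c1)]
  have h4 : Real.log 4 = 2 * Real.log 2 := by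
    rw [show (4:ℝ) = 2^2 by norm_num, Real.log_pow]; push_cast; ring
  rcases hs with h | h <;> subst h
  · have : A w * 1 + B w = Real.log (2 * Real.cosh (w + J)) := by
      rw [hA, hB, hlog, hlog2, Real.log_mul (by norm_num) (ne_of_gt c1), h4]; ring
    rw [this, Real.exp_log (by positivity)]
    rw [show J * 1 + w = w + J by ring]
  · have : A w * (-1) + B w = Real.log (2 * Real.cosh (w - J)) := by
      rw [hA, hB, hlog, hlog2, Real.log_mul (by norm_num) (ne_of_gt c2), h4]; ring
    rw [this, Real.exp_log (by positivity)]
    rw [show J * (-1) + w = w - J by ring]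

end KeyId

lemma sum_snoc_split (n : ℕ) (F : (Fin (n+1) → Bool) → ℝ) :
    ∑ x : Fin (n+1) → Bool, F x = ∑ x : Fin n → Bool, ∑ b : Bool, F (Fin.snoc x b) := by
  have h1 : ∑ x : Fin (n+1) → Bool, F x
      = ∑ p : Bool × (Fin n → Bool), F (Fin.snoc p.2 p.1) :=
    (Fintype.sum_equiv (Fin.snocEquiv (fun _ => Bool)) _ _ (fun p => rfl)).symm
  rw [h1, Fintype.sum_prod_type]
  exact Finset.sum_comm

lemma Zgen {J : ℝ} {A B : ℝ → ℝ}
    (hA : ∀ u, A u = (1/2) * Real.log (Real.cosh (u + J) / Real.cosh (u - J)))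
    (hB : ∀ u, B u = (1/2) * Real.log (4 * Real.cosh (u + J) * Real.cosh (u - J)))
    (spin : Bool → ℝ) (hspin : ∀ b, spin b = if b then 1 else -1) :
    ∀ (n : ℕ) (f : ℕ → ℝ),
    ∑ x : Fin (n+1) → Bool,
      Real.exp (J * ∑ i : Fin n, spin (x i.castSucc) * spin (x i.succ)
        + ∑ i : Fin (n+1), spin (x i) * f i)
    = 2 * Real.cosh (Vf A f n 0) * Real.exp (∑ i ∈ Finset.Icc 1 n, B (Vf A f n i)) := by
  have hs : ∀ b, spin b = 1 ∨ spin b = -1 := by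
    intro b; rw [hspin]; cases b <;> simp
  have hA0' : A 0 = 0 := hA0 hA
  intro n
  induction n with
  | zero =>
    intro f
    have h1 : ∑ x : Fin 1 → Bool,
        Real.exp (J * ∑ i : Fin 0, spin (x i.castSucc) * spin (x i.succ)
          + ∑ i : Fin 1, spin (x i) * f i)
        = ∑ b : Bool, Real.exp (spin b * f 0) := by
      apply Fintype.sum_equiv (Equiv.funUnique (Fin 1) Bool)
      intro x
      simp [Fin.sum_univ_one]
    rw [h1, Fintype.sum_bool, hspin, hspin]
    rw [Finset.Icc_eq_empty (by omega), Finset.sum_empty, Real.exp_zero, mul_one,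
      Vf_top hA0', Real.cosh_eq]
    norm_num
    ring
  | succ n ih =>
    intro f
    set f' : ℕ → ℝ := fun j => if j = n then f n + A (f (n+1)) else f j with hf'def
    rw [sum_snoc_split (n+1)]
    have hsplit : ∀ (x : Fin (n+1) → Bool) (b : Bool),
        (J * ∑ i : Fin (n+1), spin ((Fin.snoc x b : Fin (n+2) → Bool) i.castSucc)
            * spin ((Fin.snoc x b : Fin (n+2) → Bool) i.succ)
          + ∑ i : Fin (n+2), spin ((Fin.snoc x b : Fin (n+2) → Bool) i) * f i)
        = (J * ∑ i : Fin n, spin (x i.castSucc) * spin (x i.succ)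
            + ∑ i : Fin (n+1), spin (x i) * f i)
          + (J * spin (x (Fin.last n)) + f (n+1)) * spin b := by
      intro x b
      simp only [Fin.sum_univ_castSucc, Fin.snoc_castSucc, Fin.succ_castSucc, Fin.snoc_last,
        Fin.succ_last, Fin.coe_castSucc, Fin.val_last]
      ring
    have hinner : ∀ x : Fin (n+1) → Bool,
        (∑ b : Bool, Real.exp ((J * ∑ i : Fin n, spin (x i.castSucc) * spin (x i.succ)
            + ∑ i : Fin (n+1), spin (x i) * f i)
          + (J * spin (x (Fin.last n)) + f (n+1)) * spin b))
        = Real.exp (B (f (n+1)))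
          * Real.exp (J * ∑ i : Fin n, spin (x i.castSucc) * spin (x i.succ)
            + ∑ i : Fin (n+1), spin (x i) * f' i) := by
      intro x
      have h2c := key2cosh hA hB (spin (x (Fin.last n))) (f (n+1)) (hs _)
      have hsum : ∑ i : Fin (n+1), spin (x i) * f' i
          = (∑ i : Fin (n+1), spin (x i) * f i) + spin (x (Fin.last n)) * A (f (n+1)) := by
        rw [Fin.sum_univ_castSucc (f := fun i : Fin (n+1) => spin (x i) * f' i),
          Fin.sum_univ_castSucc (f := fun i : Fin (n+1) => spin (x i) * f i)]
        simp only [Fin.coe_castSucc, Fin.val_last, hf'def]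
        rw [Finset.sum_congr rfl (fun i (_ : i ∈ Finset.univ) => by
            rw [if_neg (by omega : ¬ ((i : Fin n) : ℕ) = n)]), if_pos trivial]
        ring
      have hexp2 : ∀ c d : ℝ, (∑ b : Bool, Real.exp (c + d * spin b))
          = Real.exp c * (2 * Real.cosh d) := by
        intro c d
        rw [Fintype.sum_bool, hspin true, hspin false]
        norm_num [Real.cosh_eq, Real.exp_add, Real.exp_sub, Real.exp_neg]
        ring
      rw [hexp2, h2c, hsum, ← Real.exp_add, ← Real.exp_add]
      congr 1
      ring
    calc ∑ x : Fin (n+1) → Bool, ∑ b : Bool,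
          Real.exp (J * ∑ i : Fin (n+1), spin ((Fin.snoc x b : Fin (n+2) → Bool) i.castSucc)
            * spin ((Fin.snoc x b : Fin (n+2) → Bool) i.succ)
          + ∑ i : Fin (n+2), spin ((Fin.snoc x b : Fin (n+2) → Bool) i) * f i)
        = ∑ x : Fin (n+1) → Bool, Real.exp (B (f (n+1)))
            * Real.exp (J * ∑ i : Fin n, spin (x i.castSucc) * spin (x i.succ)
              + ∑ i : Fin (n+1), spin (x i) * f' i) := by
          refine Finset.sum_congr rfl (fun x _ => ?_)
          rw [← hinner x]
          exact Finset.sum_congr rfl (fun b _ => by rw [hsplit x b])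
      _ = Real.exp (B (f (n+1)))
            * (2 * Real.cosh (Vf A f' n 0) * Real.exp (∑ i ∈ Finset.Icc 1 n, B (Vf A f' n i))) := by
          rw [← Finset.mul_sum, ih f']
      _ = 2 * Real.cosh (Vf A f (n+1) 0)
            * Real.exp (∑ i ∈ Finset.Icc 1 (n+1), B (Vf A f (n+1) i)) := by
          have hv : ∀ i, i ≤ n → Vf A f' n i = Vf A f (n+1) i := fun i hi =>
            Vf_update hA0' f n n i (by omega) hi
          rw [hv 0 (by omega),
            Finset.sum_congr rfl (fun i hi => by
              rw [hv i (Finset.mem_Icc.mp hi).2]),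
            Finset.sum_Icc_succ_top (by omega : 1 ≤ n + 1), ← Vf_top (A := A) (f := f) (n := n+1) hA0']
          rw [Real.exp_add]
          ring

section Analytic

variable {J : ℝ} {A B : ℝ → ℝ}

lemma cosh_prod (u : ℝ) (J : ℝ) :
    Real.cosh (u + J) * Real.cosh (u - J) = Real.cosh u ^ 2 + Real.sinh J ^ 2 := by
  rw [Real.cosh_add, Real.cosh_sub]
  nlinarith [Real.cosh_sq_sub_sinh_sq u, Real.cosh_sq_sub_sinh_sq J]

lemma lipA (hA : ∀ u, A u = (1/2) * Real.log (Real.cosh (u + J) / Real.cosh (u - J))) :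
    ∀ u v : ℝ, |A u - A v| ≤ |Real.tanh J| * |u - v| := by
  set A' : ℝ → ℝ := fun u =>
    (1/2) * (Real.sinh (u+J)/Real.cosh (u+J) - Real.sinh (u-J)/Real.cosh (u-J)) with hA'
  have hd : ∀ u, HasDerivAt A (A' u) u := by
    intro u
    have e1 : HasDerivAt (fun w : ℝ => w + J) 1 u := (hasDerivAt_id u).add_const J
    have e2 : HasDerivAt (fun w : ℝ => w - J) 1 u := (hasDerivAt_id u).sub_const J
    have c1 : HasDerivAt (fun w : ℝ => Real.cosh (w + J)) (Real.sinh (u+J)) u := by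
      have h := (Real.hasDerivAt_cosh (u+J)).comp u e1
      rw [mul_one] at h; exact h
    have c2 : HasDerivAt (fun w : ℝ => Real.cosh (w - J)) (Real.sinh (u-J)) u := by
      have h := (Real.hasDerivAt_cosh (u-J)).comp u e2
      rw [mul_one] at h; exact h
    have l1 := c1.log (ne_of_gt (Real.cosh_pos _))
    have l2 := c2.log (ne_of_gt (Real.cosh_pos _))
    have comb := (l1.sub l2).const_mul (1/2 : ℝ)
    have hfun : (fun w => (1/2 : ℝ) * (Real.log (Real.cosh (w+J)) - Real.log (Real.cosh (w-J))))
        = A := by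
      funext w
      rw [hA w, Real.log_div (ne_of_gt (Real.cosh_pos _)) (ne_of_gt (Real.cosh_pos _))]
    simp only [Pi.sub_apply] at comb
    rw [hfun] at comb
    exact comb
  have bnd : ∀ u, |A' u| ≤ |Real.tanh J| := by
    intro u
    have hc1 : (0:ℝ) < Real.cosh (u+J) := Real.cosh_pos _
    have hc2 : (0:ℝ) < Real.cosh (u-J) := Real.cosh_pos _
    have hcJ : (0:ℝ) < Real.cosh J := Real.cosh_pos _
    have key : Real.sinh (u+J) * Real.cosh (u-J) - Real.cosh (u+J) * Real.sinh (u-J)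
        = 2 * Real.sinh J * Real.cosh J := by
      have h := Real.sinh_sub (u+J) (u-J)
      rw [show (u+J) - (u-J) = 2*J by ring, Real.sinh_two_mul] at h
      linarith
    have h1 : A' u = Real.sinh J * Real.cosh J / (Real.cosh (u+J) * Real.cosh (u-J)) := by
      simp only [hA']
      rw [div_sub_div _ _ (ne_of_gt hc1) (ne_of_gt hc2), key]
      ring
    rw [h1, Real.tanh_eq_sinh_div_cosh, abs_div, abs_div, abs_mul,
      abs_of_pos hcJ, abs_of_pos (mul_pos hc1 hc2)]
    rw [div_le_div_iff₀ (mul_pos hc1 hc2) hcJ]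
    have hprod : Real.cosh (u+J) * Real.cosh (u-J) = Real.cosh u ^ 2 + Real.sinh J ^ 2 :=
      cosh_prod u J
    have hcu : 1 ≤ Real.cosh u ^ 2 := by nlinarith [Real.one_le_cosh u]
    have hJ2 : Real.cosh J ^ 2 = 1 + Real.sinh J ^ 2 := by
      nlinarith [Real.cosh_sq_sub_sinh_sq J]
    calc |Real.sinh J| * Real.cosh J * Real.cosh J
        = |Real.sinh J| * (1 + Real.sinh J ^ 2) := by rw [mul_assoc, ← sq, hJ2]
    _ ≤ |Real.sinh J| * (Real.cosh u ^ 2 + Real.sinh J ^ 2) :=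
        mul_le_mul_of_nonneg_left (by linarith) (abs_nonneg _)
    _ = |Real.sinh J| * (Real.cosh (u+J) * Real.cosh (u-J)) := by rw [hprod]
  intro u v
  have := Convex.norm_image_sub_le_of_norm_hasDerivWithin_le (s := Set.univ) (f := A) (f' := A')
    (fun x _ => (hd x).hasDerivWithinAt) (fun x _ => by rw [Real.norm_eq_abs]; exact bnd x)
    convex_univ (Set.mem_univ v) (Set.mem_univ u)
  simpa [Real.norm_eq_abs] using this

lemma Abnd (hA : ∀ u, A u = (1/2) * Real.log (Real.cosh (u + J) / Real.cosh (u - J))) :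
    ∀ w : ℝ, |A w| ≤ |J| := by
  intro w
  have hc1 : (0:ℝ) < Real.cosh (w+J) := Real.cosh_pos _
  have hc2 : (0:ℝ) < Real.cosh (w-J) := Real.cosh_pos _
  have hcw : (0:ℝ) < Real.cosh w := Real.cosh_pos _
  have hE : Real.exp |J| = Real.cosh J + |Real.sinh J| := by
    rw [← Real.cosh_abs J, Real.abs_sinh, Real.cosh_add_sinh]
  have hE' : Real.exp (-|J|) = Real.cosh J - |Real.sinh J| := by
    rw [← Real.cosh_abs J, Real.abs_sinh, Real.cosh_sub_sinh]
  have hsw : |Real.sinh w| ≤ Real.cosh w := by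
    rw [Real.abs_sinh]
    calc Real.sinh |w| ≤ Real.cosh |w| := le_of_lt (Real.sinh_lt_cosh _)
    _ = Real.cosh w := Real.cosh_abs w
  have habs : |Real.sinh w * Real.sinh J| ≤ Real.cosh w * |Real.sinh J| := by
    rw [abs_mul]
    exact mul_le_mul_of_nonneg_right hsw (abs_nonneg _)
  have habs' := abs_le.mp habs
  have h1 : Real.cosh (w+J) ≤ Real.cosh w * Real.exp |J| := by
    rw [Real.cosh_add, hE]; nlinarith [habs'.2]
  have h2 : Real.cosh w * Real.exp (-|J|) ≤ Real.cosh (w-J) := by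
    rw [Real.cosh_sub, hE']; nlinarith [habs'.2]
  have h1' : Real.cosh (w-J) ≤ Real.cosh w * Real.exp |J| := by
    rw [Real.cosh_sub, hE]; nlinarith [habs'.1]
  have h2' : Real.cosh w * Real.exp (-|J|) ≤ Real.cosh (w+J) := by
    rw [Real.cosh_add, hE']; nlinarith [habs'.1]
  have hr1 : Real.cosh (w+J) ≤ Real.exp (2*|J|) * Real.cosh (w-J) := by
    calc Real.cosh (w+J) ≤ Real.cosh w * Real.exp |J| := h1
    _ = (Real.cosh w * Real.exp (-|J|)) * Real.exp (2*|J|) := by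
        rw [mul_assoc, ← Real.exp_add, show -|J| + 2*|J| = |J| by ring]
    _ ≤ Real.cosh (w-J) * Real.exp (2*|J|) :=
        mul_le_mul_of_nonneg_right h2 (le_of_lt (Real.exp_pos _))
    _ = Real.exp (2*|J|) * Real.cosh (w-J) := mul_comm _ _
  have hr2 : Real.exp (-(2*|J|)) * Real.cosh (w-J) ≤ Real.cosh (w+J) := by
    calc Real.exp (-(2*|J|)) * Real.cosh (w-J)
        ≤ Real.exp (-(2*|J|)) * (Real.cosh w * Real.exp |J|) :=
        mul_le_mul_of_nonneg_left h1' (le_of_lt (Real.exp_pos _))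
    _ = Real.cosh w * Real.exp (-|J|) := by
        rw [mul_left_comm, ← Real.exp_add, show -(2*|J|) + |J| = -|J| by ring]
    _ ≤ Real.cosh (w+J) := h2'
  have hrpos : (0:ℝ) < Real.cosh (w+J) / Real.cosh (w-J) := div_pos hc1 hc2
  have hup : Real.log (Real.cosh (w+J) / Real.cosh (w-J)) ≤ 2*|J| :=
    (Real.log_le_iff_le_exp hrpos).mpr (by rw [div_le_iff₀ hc2]; linarith)
  have hlo : -(2*|J|) ≤ Real.log (Real.cosh (w+J) / Real.cosh (w-J)) :=
    (Real.le_log_iff_exp_le hrpos).mpr (by rw [le_div_iff₀ hc2]; linarith)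
  have habslog : |Real.log (Real.cosh (w+J) / Real.cosh (w-J))| ≤ 2*|J| :=
    abs_le.mpr ⟨hlo, hup⟩
  rw [hA w, abs_mul, abs_of_pos (by norm_num : (0:ℝ) < 1/2)]
  linarith

end Analytic

section Gfun

variable {J : ℝ} {B : ℝ → ℝ}

lemma Gstuff (hB : ∀ u, B u = (1/2) * Real.log (4 * Real.cosh (u + J) * Real.cosh (u - J))) :
    (∀ v : ℝ, Real.exp (B v) / Real.cosh v ≤ 2 * Real.cosh J) ∧
    (∀ u v : ℝ, |Real.exp (B u) / Real.cosh u - Real.exp (B v) / Real.cosh v|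
      ≤ (4 * Real.cosh J) * |u - v|) := by
  have hcJ : (0:ℝ) < Real.cosh J := Real.cosh_pos _
  set φ : ℝ → ℝ := fun v => B v - Real.log (Real.cosh v) with hφdef
  have hG : ∀ v : ℝ, Real.exp (B v) / Real.cosh v = Real.exp (φ v) := by
    intro v
    rw [hφdef]
    rw [Real.exp_sub, Real.exp_log (Real.cosh_pos v)]
  have hφbnd : ∀ v : ℝ, φ v ≤ Real.log (2 * Real.cosh J) := by
    intro v
    have hc1 : (0:ℝ) < Real.cosh (v+J) := Real.cosh_pos _
    have hc2 : (0:ℝ) < Real.cosh (v-J) := Real.cosh_pos _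
    have hcv : (0:ℝ) < Real.cosh v := Real.cosh_pos _
    have hX : (0:ℝ) < 4 * Real.cosh (v+J) * Real.cosh (v-J) := by positivity
    have hY : (0:ℝ) < 2 * Real.cosh J * Real.cosh v := by positivity
    have hXY : 4 * Real.cosh (v+J) * Real.cosh (v-J)
        ≤ (2 * Real.cosh J * Real.cosh v) ^ 2 := by
      have hprod := cosh_prod v J
      have hJ2 : Real.cosh J ^ 2 = 1 + Real.sinh J ^ 2 := by
        nlinarith [Real.cosh_sq_sub_sinh_sq J]
      have hcv1 : 1 ≤ Real.cosh v ^ 2 := by nlinarith [Real.one_le_cosh v]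
      nlinarith [sq_nonneg (Real.sinh J), mul_nonneg (sq_nonneg (Real.sinh J))
        (sub_nonneg.mpr hcv1)]
    have hlog : Real.log (4 * Real.cosh (v+J) * Real.cosh (v-J))
        ≤ 2 * Real.log (2 * Real.cosh J * Real.cosh v) := by
      calc Real.log (4 * Real.cosh (v+J) * Real.cosh (v-J))
          ≤ Real.log ((2 * Real.cosh J * Real.cosh v) ^ 2) :=
          Real.log_le_log hX hXY
      _ = 2 * Real.log (2 * Real.cosh J * Real.cosh v) := by
          rw [Real.log_pow]; push_cast; ring
    have : φ v = (1/2) * Real.log (4 * Real.cosh (v+J) * Real.cosh (v-J))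
        - Real.log (Real.cosh v) := by rw [hφdef]; simp only []; rw [hB v]
    rw [this, Real.log_mul (by positivity) (ne_of_gt hcv)] at *
    linarith
  have hexp_bnd : ∀ v : ℝ, Real.exp (φ v) ≤ 2 * Real.cosh J := by
    intro v
    calc Real.exp (φ v) ≤ Real.exp (Real.log (2 * Real.cosh J)) :=
      Real.exp_le_exp.mpr (hφbnd v)
    _ = 2 * Real.cosh J := Real.exp_log (by positivity)
  set φ' : ℝ → ℝ := fun v =>
    (1/2) * (Real.sinh (v+J)/Real.cosh (v+J)) + (1/2) * (Real.sinh (v-J)/Real.cosh (v-J))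
      - Real.sinh v / Real.cosh v with hφ'def
  have hφd : ∀ v, HasDerivAt φ (φ' v) v := by
    intro v
    have e1 : HasDerivAt (fun w : ℝ => w + J) 1 v := (hasDerivAt_id v).add_const J
    have e2 : HasDerivAt (fun w : ℝ => w - J) 1 v := (hasDerivAt_id v).sub_const J
    have c1 : HasDerivAt (fun w : ℝ => Real.cosh (w + J)) (Real.sinh (v+J)) v := by
      have h := (Real.hasDerivAt_cosh (v+J)).comp v e1
      rw [mul_one] at h; exact h
    have c2 : HasDerivAt (fun w : ℝ => Real.cosh (w - J)) (Real.sinh (v-J)) v := by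
      have h := (Real.hasDerivAt_cosh (v-J)).comp v e2
      rw [mul_one] at h; exact h
    have l1 := c1.log (ne_of_gt (Real.cosh_pos _))
    have l2 := c2.log (ne_of_gt (Real.cosh_pos _))
    have l3 := (Real.hasDerivAt_cosh v).log (ne_of_gt (Real.cosh_pos _))
    have comb := (((l1.const_mul (1/2:ℝ)).add (l2.const_mul (1/2:ℝ))).add
      ((l3.const_mul (1:ℝ)).neg)).add_const ((1/2) * Real.log 4)
    have hfun : (fun w => ((1/2 : ℝ) * Real.log (Real.cosh (w+J))
          + (1/2 : ℝ) * Real.log (Real.cosh (w-J)) + -(1 * Real.log (Real.cosh w)))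
          + (1/2) * Real.log 4) = φ := by
      funext w
      rw [hφdef]
      simp only []
      rw [hB w, Real.log_mul (by positivity) (ne_of_gt (Real.cosh_pos _)),
        Real.log_mul (by norm_num) (ne_of_gt (Real.cosh_pos _))]
      ring
    simp only [Pi.add_apply, Pi.neg_apply] at comb
    rw [hfun] at comb
    refine comb.congr_deriv ?_
    rw [hφ'def]
    simp only []
    ring
  have hratio : ∀ x : ℝ, |Real.sinh x / Real.cosh x| ≤ 1 := by
    intro x
    rw [abs_div, abs_of_pos (Real.cosh_pos x), div_le_one (Real.cosh_pos x)]
    rw [Real.abs_sinh]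
    calc Real.sinh |x| ≤ Real.cosh |x| := le_of_lt (Real.sinh_lt_cosh _)
    _ = Real.cosh x := Real.cosh_abs x
  have hφ'bnd : ∀ v, |φ' v| ≤ 2 := by
    intro v
    rw [hφ'def]
    simp only []
    have h1 := hratio (v+J)
    have h2 := hratio (v-J)
    have h3 := hratio v
    have := abs_le.mp h1
    have := abs_le.mp h2
    have := abs_le.mp h3
    rw [abs_le]
    constructor <;> [skip; skip] <;>
      (first
        | (obtain ⟨a1, b1⟩ := abs_le.mp h1; obtain ⟨a2, b2⟩ := abs_le.mp h2;
           obtain ⟨a3, b3⟩ := abs_le.mp h3; linarith))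
  have hGd : ∀ v, HasDerivAt (fun v => Real.exp (B v) / Real.cosh v)
      (Real.exp (φ v) * φ' v) v := by
    intro v
    have := (hφd v).exp
    have hfun : Real.exp ∘ φ = (fun v => Real.exp (B v) / Real.cosh v) := by
      funext w
      simp only [Function.comp_apply]
      rw [hG w]
    rw [show (fun x => Real.exp (φ x)) = (fun v => Real.exp (B v) / Real.cosh v) from
      funext (fun w => (hG w).symm)] at this
    exact this
  have hGd_bnd : ∀ v, |Real.exp (φ v) * φ' v| ≤ 4 * Real.cosh J := by
    intro v
    rw [abs_mul, abs_of_pos (Real.exp_pos _)]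
    calc Real.exp (φ v) * |φ' v| ≤ (2 * Real.cosh J) * 2 :=
      mul_le_mul (hexp_bnd v) (hφ'bnd v) (abs_nonneg _) (by positivity)
    _ = 4 * Real.cosh J := by ring
  refine ⟨fun v => by rw [hG v]; exact hexp_bnd v, fun u v => ?_⟩
  have := Convex.norm_image_sub_le_of_norm_hasDerivWithin_le (s := Set.univ)
    (f := fun v => Real.exp (B v) / Real.cosh v) (f' := fun v => Real.exp (φ v) * φ' v)
    (fun x _ => (hGd x).hasDerivWithinAt)
    (fun x _ => by rw [Real.norm_eq_abs]; exact hGd_bnd x)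
    convex_univ (Set.mem_univ v) (Set.mem_univ u)
  simpa [Real.norm_eq_abs] using this

end Gfun

lemma coshx_le_exp_abs (x : ℝ) : Real.cosh x ≤ Real.exp |x| := by
  rw [Real.cosh_eq]
  have h1 : Real.exp x ≤ Real.exp |x| := Real.exp_le_exp.mpr (le_abs_self x)
  have h2 : Real.exp (-x) ≤ Real.exp |x| := Real.exp_le_exp.mpr (neg_le_abs x)
  linarith

lemma abs_sinh_le_cosh (x : ℝ) : |Real.sinh x| ≤ Real.cosh x := by
  rw [Real.abs_sinh]
  calc Real.sinh |x| ≤ Real.cosh |x| := le_of_lt (Real.sinh_lt_cosh _)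
  _ = Real.cosh x := Real.cosh_abs x

lemma lipcosh (R : ℝ) (u v : ℝ) (hu : |u| ≤ R) (hv : |v| ≤ R) :
    |Real.cosh u - Real.cosh v| ≤ Real.exp R * |u - v| := by
  have hbnd : ∀ x ∈ Set.Icc (-R) R, ‖Real.sinh x‖ ≤ Real.exp R := by
    intro x hx
    rw [Real.norm_eq_abs]
    calc |Real.sinh x| ≤ Real.cosh x := abs_sinh_le_cosh x
    _ ≤ Real.exp |x| := coshx_le_exp_abs x
    _ ≤ Real.exp R := Real.exp_le_exp.mpr (abs_le.mpr ⟨hx.1, hx.2⟩)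
  have := Convex.norm_image_sub_le_of_norm_hasDerivWithin_le (s := Set.Icc (-R) R)
    (f := Real.cosh) (f' := Real.sinh)
    (fun x _ => (Real.hasDerivAt_cosh x).hasDerivWithinAt) hbnd
    (convex_Icc _ _)
    (Set.mem_Icc.mpr ⟨(abs_le.mp hv).1, (abs_le.mp hv).2⟩)
    (Set.mem_Icc.mpr ⟨(abs_le.mp hu).1, (abs_le.mp hu).2⟩)
  simpa [Real.norm_eq_abs] using this

lemma W_eq_Vf {A : ℝ → ℝ} {K : ℝ} (W : (ℕ → ℝ) → ℕ → ℕ → ℝ) (y : ℕ → ℝ)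
    (hW0 : ∀ n i, n < i → W y n i = 0)
    (hWrec : ∀ n i, i ≤ n → W y n i = K * y i + A (W y n (i + 1))) :
    ∀ n i, W y n i = Vf A (fun j => K * y j) n i := by
  intro n
  suffices h : ∀ k i, n + 1 ≤ i + k → W y n i = Vf A (fun j => K * y j) n i from
    fun i => h (n+1) i (by omega)
  intro k
  induction k with
  | zero => intro i hi; rw [hW0 n i (by omega), Vf_gt (by omega)]
  | succ k ih =>
    intro i hi
    rcases le_or_gt i n with h|h
    · rw [hWrec n i h, Vf_le h, ih (i+1) (by omega)]
    · rw [hW0 n i h, Vf_gt h]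

lemma Vf_shift (A : ℝ → ℝ) (f : ℕ → ℝ) :
    ∀ n i, Vf A (fun j => f (j+1)) n i = Vf A f (n+1) (i+1) := by
  intro n
  suffices h : ∀ k i, n + 1 ≤ i + k → Vf A (fun j => f (j+1)) n i = Vf A f (n+1) (i+1) from
    fun i => h (n+1) i (by omega)
  intro k
  induction k with
  | zero => intro i hi; rw [Vf_gt (by omega), Vf_gt (by omega)]
  | succ k ih =>
    intro i hi
    rcases le_or_gt i n with h|h
    · rw [Vf_le h, Vf_le (by omega : i + 1 ≤ n + 1), ih (i+1) (by omega)]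
    · rw [Vf_gt h, Vf_gt (by omega)]

lemma sum_Icc_shift (F : ℕ → ℝ) : ∀ m : ℕ,
    ∑ i ∈ Finset.Icc 1 (m+1), F i = F 1 + ∑ i ∈ Finset.Icc 1 m, F (i+1) := by
  intro m
  induction m with
  | zero => simp
  | succ m ih =>
    rw [Finset.sum_Icc_succ_top (by omega : 1 ≤ m+1+1), ih,
      Finset.sum_Icc_succ_top (by omega : 1 ≤ m+1)]
    ring


/-- There exist constants `C > 0` and `ρ ∈ (0,1)` such that for every
`y ∈ {−1,1}^{ℤ₊}` and every `n ≥ 1` (encoded `n = m + 1`),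
`| Z_{0,n}(y_0,…,y_n)/(λ·Z_{1,n}(y_1,…,y_n)) − g(y) | ≤ C·ρⁿ`, where
`g(y) = (1/λ)·cosh(w_0(y))·exp(B(w_1(y)))/cosh(w_1(y))`; i.e., the conditional
probabilities `Q(y_0 | y_1,…,y_n)` converge uniformly and exponentially fast to the
continuous positive function `g`, so `Q` is a `g`-measure. Here `W y n i = w_i^{(n)}(y)`
and `wlim y i = w_i(y)`. -/
theorem stmt_13 (p ε : ℝ) (hp0 : 0 < p) (hp1 : p < 1) (hp2 : p ≠ 1 / 2)
    (hε0 : 0 < ε) (hε1 : ε < 1)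
    (J K lam : ℝ)
    (hJ : J = (1 / 2) * Real.log ((1 - p) / p))
    (hK : K = (1 / 2) * Real.log ((1 - ε) / ε))
    (hlam : lam = 4 * Real.cosh J * Real.cosh K)
    (A B : ℝ → ℝ)
    (hA : ∀ u, A u = (1 / 2) * Real.log (Real.cosh (u + J) / Real.cosh (u - J)))
    (hB : ∀ u, B u = (1 / 2) * Real.log (4 * Real.cosh (u + J) * Real.cosh (u - J)))
    (spin : Bool → ℝ) (hspin : ∀ b, spin b = if b then 1 else -1)
    (W : (ℕ → ℝ) → ℕ → ℕ → ℝ)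
    (hW0 : ∀ (y : ℕ → ℝ) (n i : ℕ), n < i → W y n i = 0)
    (hWrec : ∀ (y : ℕ → ℝ) (n i : ℕ), i ≤ n → W y n i = K * y i + A (W y n (i + 1)))
    (wlim : (ℕ → ℝ) → ℕ → ℝ)
    (hwlim : ∀ (y : ℕ → ℝ) (i : ℕ),
      Filter.Tendsto (fun n => W y n i) Filter.atTop (nhds (wlim y i)))
    (g : (ℕ → ℝ) → ℝ)
    (hg : ∀ y : ℕ → ℝ,
      g y = (1 / lam) * Real.cosh (wlim y 0) * Real.exp (B (wlim y 1))
              / Real.cosh (wlim y 1)) :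
    (∀ y : ℕ → ℝ, (∀ i, y i = 1 ∨ y i = -1) → 0 < g y) ∧
    ∃ C > (0 : ℝ), ∃ ρ ∈ Set.Ioo (0 : ℝ) 1,
      ∀ y : ℕ → ℝ, (∀ i, y i = 1 ∨ y i = -1) → ∀ m : ℕ,
        |(∑ x : Fin (m + 2) → Bool,
            Real.exp (J * ∑ i : Fin (m + 1), spin (x i.castSucc) * spin (x i.succ)
              + K * ∑ i : Fin (m + 2), spin (x i) * y i))
          / (lam * ∑ x : Fin (m + 1) → Bool,
            Real.exp (J * ∑ i : Fin m, spin (x i.castSucc) * spin (x i.succ)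
              + K * ∑ i : Fin (m + 1), spin (x i) * y (1 + i)))
          - g y| ≤ C * ρ ^ (m + 1) := by
  have hcJ : (0:ℝ) < Real.cosh J := Real.cosh_pos _
  have hcK : (0:ℝ) < Real.cosh K := Real.cosh_pos _
  have hlam_pos : (0:ℝ) < lam := by rw [hlam]; positivity
  have hJ0 : J ≠ 0 := by
    intro h0
    have hratio : (0:ℝ) < (1-p)/p := div_pos (by linarith) hp0
    have hlogzero : Real.log ((1-p)/p) = 0 := by
      rw [h0] at hJ
      linarith [hJ]
    rcases Real.log_eq_zero.mp hlogzero with h | h | h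
    · rw [h] at hratio; exact lt_irrefl _ hratio
    · apply hp2
      have hpne : p ≠ 0 := ne_of_gt hp0
      field_simp at h
      linarith
    · rw [h] at hratio; linarith
  have hsinh0 : Real.sinh J ≠ 0 := Real.sinh_ne_zero.mpr hJ0
  set ρ : ℝ := |Real.tanh J| with hρdef
  have hρ0 : 0 < ρ := abs_pos.mpr (by
    rw [Real.tanh_eq_sinh_div_cosh]
    exact div_ne_zero hsinh0 (ne_of_gt hcJ))
  have hρ1 : ρ < 1 := by
    rw [hρdef, Real.tanh_eq_sinh_div_cosh, abs_div, abs_of_pos hcJ, div_lt_one hcJ]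
    have h1 := Real.cosh_add_sinh J
    have h2 := Real.cosh_sub_sinh J
    have e1 : (0:ℝ) < Real.exp J := Real.exp_pos _
    have e2 : (0:ℝ) < Real.exp (-J) := Real.exp_pos _
    rw [abs_lt]
    constructor <;> nlinarith
  set K0 : ℝ := |K| + |J| with hK0def
  have hK0 : 0 ≤ K0 := by positivity
  have hgx : ∀ y : ℕ → ℝ, g y = (1/lam) * (Real.cosh (wlim y 0)
      * (Real.exp (B (wlim y 1)) / Real.cosh (wlim y 1))) := by
    intro y; rw [hg y]; ring
  obtain ⟨hGb, hGl⟩ := Gstuff hB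
  have hlA := lipA hA
  have hAb := Abnd hA
  constructor
  · intro y hy
    rw [hgx y]
    exact mul_pos (one_div_pos.mpr hlam_pos)
      (mul_pos (Real.cosh_pos _) (div_pos (Real.exp_pos _) (Real.cosh_pos _)))
  have hCpos : (0:ℝ) < 6 * Real.exp K0 * Real.cosh J * K0 / lam + 1 := by
    have h1 : (0:ℝ) ≤ 6 * Real.exp K0 * Real.cosh J * K0 / lam :=
      div_nonneg (by positivity) hlam_pos.le
    linarith
  refine ⟨6 * Real.exp K0 * Real.cosh J * K0 / lam + 1, hCpos, ρ, ⟨hρ0, hρ1⟩, ?_⟩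
  intro y hy m
  have habs1 : ∀ i, |y i| = 1 := fun i => by rcases hy i with h|h <;> rw [h] <;> norm_num
  have hWb : ∀ n j, |W y n j| ≤ K0 := by
    intro n j
    rcases le_or_gt j n with h|h
    · rw [hWrec y n j h]
      calc |K * y j + A (W y n (j+1))| ≤ |K * y j| + |A (W y n (j+1))| := abs_add_le _ _
      _ ≤ |K| + |J| := by
          rw [abs_mul, habs1 j, mul_one]
          exact add_le_add le_rfl (hAb _)
    · rw [hW0 y n j h, abs_zero]; exact hK0
  have hkey : ∀ n n', n ≤ n' → ∀ k, ∀ i, i + k = n + 1 →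
      |W y n i - W y n' i| ≤ ρ^k * K0 := by
    intro n n' hnn' k
    induction k with
    | zero =>
      intro i hi
      rw [show i = n + 1 by omega, hW0 y n (n+1) (by omega), pow_zero, one_mul,
        zero_sub, abs_neg]
      exact hWb n' (n+1)
    | succ k ih =>
      intro i hi
      have hin : i ≤ n := by omega
      have hin' : i ≤ n' := by omega
      rw [hWrec y n i hin, hWrec y n' i hin',
        show K * y i + A (W y n (i+1)) - (K * y i + A (W y n' (i+1)))
          = A (W y n (i+1)) - A (W y n' (i+1)) by ring]
      calc |A (W y n (i+1)) - A (W y n' (i+1))|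
          ≤ ρ * |W y n (i+1) - W y n' (i+1)| := hlA _ _
      _ ≤ ρ * (ρ^k * K0) := mul_le_mul_of_nonneg_left (ih (i+1) (by omega)) hρ0.le
      _ = ρ^(k+1) * K0 := by ring
  have hlim : ∀ n i, i ≤ n → |W y n i - wlim y i| ≤ ρ^(n+1-i) * K0 := by
    intro n i hin
    have htd : Filter.Tendsto (fun n' => |W y n i - W y n' i|) Filter.atTop
        (nhds |W y n i - wlim y i|) := (tendsto_const_nhds.sub (hwlim y i)).abs
    refine le_of_tendsto htd ?_
    filter_upwards [Filter.eventually_ge_atTop n] with n' hn'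
    exact hkey n n' hn' (n+1-i) i (by omega)
  have hwb : ∀ i, |wlim y i| ≤ K0 := fun i =>
    le_of_tendsto (hwlim y i).abs (Filter.Eventually.of_forall (fun n => hWb n i))
  have hWV := W_eq_Vf (A := A) (K := K) W y (hW0 y) (hWrec y)
  -- numerator identity
  have hnum : (∑ x : Fin (m + 2) → Bool,
      Real.exp (J * ∑ i : Fin (m + 1), spin (x i.castSucc) * spin (x i.succ)
        + K * ∑ i : Fin (m + 2), spin (x i) * y i))
      = 2 * Real.cosh (W y (m+1) 0)
        * Real.exp (∑ i ∈ Finset.Icc 1 (m+1), B (W y (m+1) i)) := by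
    have hc : ∀ x : Fin (m+2) → Bool,
        J * (∑ i : Fin (m + 1), spin (x i.castSucc) * spin (x i.succ))
          + K * ∑ i : Fin (m + 2), spin (x i) * y i
        = J * (∑ i : Fin (m + 1), spin (x i.castSucc) * spin (x i.succ))
          + ∑ i : Fin (m + 2), spin (x i) * (K * y i) := by
      intro x
      congr 1
      rw [Finset.mul_sum]
      exact Finset.sum_congr rfl (fun i _ => by ring)
    have hsums : (∑ i ∈ Finset.Icc 1 (m+1), B (Vf A (fun j => K * y j) (m+1) i))
        = ∑ i ∈ Finset.Icc 1 (m+1), B (W y (m+1) i) :=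
      Finset.sum_congr rfl (fun i _ => by rw [hWV (m+1) i])
    rw [Finset.sum_congr rfl (fun x _ => by rw [hc x]),
      Zgen hA hB spin hspin (m+1) (fun j => K * y j), hsums, (hWV (m+1) 0).symm]
  -- denominator identity
  have hshift : ∀ i, Vf A (fun j => K * y (1+j)) m i = W y (m+1) (i+1) := by
    intro i
    have h1 : (fun j => K * y (1+j)) = (fun j => K * y (j+1)) := by
      funext j; rw [Nat.add_comm]
    rw [h1, Vf_shift A (fun j => K * y j) m i, ← hWV (m+1) (i+1)]
  have hden : (∑ x : Fin (m + 1) → Bool,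
      Real.exp (J * ∑ i : Fin m, spin (x i.castSucc) * spin (x i.succ)
        + K * ∑ i : Fin (m + 1), spin (x i) * y (1 + i)))
      = 2 * Real.cosh (W y (m+1) 1)
        * Real.exp (∑ i ∈ Finset.Icc 1 m, B (W y (m+1) (i+1))) := by
    have hc : ∀ x : Fin (m+1) → Bool,
        J * (∑ i : Fin m, spin (x i.castSucc) * spin (x i.succ))
          + K * ∑ i : Fin (m + 1), spin (x i) * y (1 + i)
        = J * (∑ i : Fin m, spin (x i.castSucc) * spin (x i.succ))
          + ∑ i : Fin (m + 1), spin (x i) * (K * y (1 + i)) := by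
      intro x
      congr 1
      rw [Finset.mul_sum]
      exact Finset.sum_congr rfl (fun i _ => by ring)
    have hsums : (∑ i ∈ Finset.Icc 1 m, B (Vf A (fun j => K * y (1+j)) m i))
        = ∑ i ∈ Finset.Icc 1 m, B (W y (m+1) (i+1)) :=
      Finset.sum_congr rfl (fun i _ => by rw [hshift i])
    rw [Finset.sum_congr rfl (fun x _ => by rw [hc x]),
      Zgen hA hB spin hspin m (fun j => K * y (1+j)), hsums, hshift 0]
  have hSB : (∑ i ∈ Finset.Icc 1 (m+1), B (W y (m+1) i))
      = B (W y (m+1) 1) + ∑ i ∈ Finset.Icc 1 m, B (W y (m+1) (i+1)) :=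
    sum_Icc_shift (fun i => B (W y (m+1) i)) m
  have hc1pos : (0:ℝ) < Real.cosh (W y (m+1) 1) := Real.cosh_pos _
  have hexppos : (0:ℝ) < Real.exp (∑ i ∈ Finset.Icc 1 m, B (W y (m+1) (i+1))) := Real.exp_pos _
  have hfrac : (∑ x : Fin (m + 2) → Bool,
      Real.exp (J * ∑ i : Fin (m + 1), spin (x i.castSucc) * spin (x i.succ)
        + K * ∑ i : Fin (m + 2), spin (x i) * y i))
      / (lam * ∑ x : Fin (m + 1) → Bool,
        Real.exp (J * ∑ i : Fin m, spin (x i.castSucc) * spin (x i.succ)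
          + K * ∑ i : Fin (m + 1), spin (x i) * y (1 + i)))
      = (1/lam) * (Real.cosh (W y (m+1) 0)
        * (Real.exp (B (W y (m+1) 1)) / Real.cosh (W y (m+1) 1))) := by
    rw [hnum, hden, hSB, Real.exp_add]
    field_simp
  rw [hfrac, hgx y]
  -- distance bounds
  have hd0 : |W y (m+1) 0 - wlim y 0| ≤ K0 * ρ^(m+1) := by
    have h := hlim (m+1) 0 (by omega)
    have he : m+1+1-0 = (m+1)+1 := by omega
    rw [he, pow_succ] at h
    nlinarith [mul_nonneg (mul_nonneg (pow_nonneg hρ0.le (m+1)) hK0)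
      (sub_nonneg.mpr hρ1.le), h]
  have hd1 : |W y (m+1) 1 - wlim y 1| ≤ K0 * ρ^(m+1) := by
    have h := hlim (m+1) 1 (by omega)
    have he : m+1+1-1 = m+1 := by omega
    rw [he] at h
    linarith [h, (mul_comm (ρ^(m+1)) K0)]
  have hstep : |Real.cosh (W y (m+1) 0)
        * (Real.exp (B (W y (m+1) 1)) / Real.cosh (W y (m+1) 1))
      - Real.cosh (wlim y 0) * (Real.exp (B (wlim y 1)) / Real.cosh (wlim y 1))|
      ≤ 6 * Real.exp K0 * Real.cosh J * (K0 * ρ^(m+1)) := by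
    set G1 := Real.exp (B (W y (m+1) 1)) / Real.cosh (W y (m+1) 1) with hG1def
    set Gb := Real.exp (B (wlim y 1)) / Real.cosh (wlim y 1) with hGbdef
    have hG1pos : 0 ≤ G1 := by
      rw [hG1def]; exact div_nonneg (Real.exp_pos _).le (Real.cosh_pos _).le
    have hG1b : G1 ≤ 2 * Real.cosh J := hGb _
    have hcb : Real.cosh (wlim y 0) ≤ Real.exp K0 :=
      le_trans (coshx_le_exp_abs _) (Real.exp_le_exp.mpr (hwb 0))
    have hca0 : 0 ≤ Real.cosh (wlim y 0) := (Real.cosh_pos _).le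
    have e1 : |Real.cosh (W y (m+1) 0) - Real.cosh (wlim y 0)|
        ≤ Real.exp K0 * (K0 * ρ^(m+1)) :=
      le_trans (lipcosh K0 _ _ (hWb (m+1) 0) (hwb 0))
        (mul_le_mul_of_nonneg_left hd0 (Real.exp_pos K0).le)
    have e2 : |G1 - Gb| ≤ 4 * Real.cosh J * (K0 * ρ^(m+1)) :=
      le_trans (hGl _ _) (mul_le_mul_of_nonneg_left hd1 (by positivity))
    rw [show Real.cosh (W y (m+1) 0) * G1 - Real.cosh (wlim y 0) * Gb
      = (Real.cosh (W y (m+1) 0) - Real.cosh (wlim y 0)) * G1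
        + Real.cosh (wlim y 0) * (G1 - Gb) by ring]
    calc |(Real.cosh (W y (m+1) 0) - Real.cosh (wlim y 0)) * G1
          + Real.cosh (wlim y 0) * (G1 - Gb)|
        ≤ |(Real.cosh (W y (m+1) 0) - Real.cosh (wlim y 0)) * G1|
          + |Real.cosh (wlim y 0) * (G1 - Gb)| := abs_add_le _ _
    _ = |Real.cosh (W y (m+1) 0) - Real.cosh (wlim y 0)| * |G1|
          + |Real.cosh (wlim y 0)| * |G1 - Gb| := by rw [abs_mul, abs_mul]
    _ ≤ (Real.exp K0 * (K0 * ρ^(m+1))) * (2 * Real.cosh J)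
          + Real.exp K0 * (4 * Real.cosh J * (K0 * ρ^(m+1))) := by
        apply add_le_add
        · exact mul_le_mul e1 (by rw [abs_of_nonneg hG1pos]; exact hG1b)
            (abs_nonneg _) (by positivity)
        · exact mul_le_mul (by rw [abs_of_nonneg hca0]; exact hcb) e2
            (abs_nonneg _) (Real.exp_pos _).le
    _ = 6 * Real.exp K0 * Real.cosh J * (K0 * ρ^(m+1)) := by ring
  rw [show (1/lam) * (Real.cosh (W y (m+1) 0)
        * (Real.exp (B (W y (m+1) 1)) / Real.cosh (W y (m+1) 1)))
      - (1/lam) * (Real.cosh (wlim y 0)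
        * (Real.exp (B (wlim y 1)) / Real.cosh (wlim y 1)))
    = (1/lam) * (Real.cosh (W y (m+1) 0)
        * (Real.exp (B (W y (m+1) 1)) / Real.cosh (W y (m+1) 1))
      - Real.cosh (wlim y 0) * (Real.exp (B (wlim y 1)) / Real.cosh (wlim y 1))) by ring]
  rw [abs_mul, abs_of_pos (one_div_pos.mpr hlam_pos)]
  have hρpow : (0:ℝ) ≤ ρ^(m+1) := pow_nonneg hρ0.le _
  calc (1/lam) * |Real.cosh (W y (m+1) 0)
        * (Real.exp (B (W y (m+1) 1)) / Real.cosh (W y (m+1) 1))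
      - Real.cosh (wlim y 0) * (Real.exp (B (wlim y 1)) / Real.cosh (wlim y 1))|
      ≤ (1/lam) * (6 * Real.exp K0 * Real.cosh J * (K0 * ρ^(m+1))) :=
      mul_le_mul_of_nonneg_left hstep (one_div_pos.mpr hlam_pos).le
  _ = (6 * Real.exp K0 * Real.cosh J * K0 / lam) * ρ^(m+1) := by
      field_simp
  _ ≤ (6 * Real.exp K0 * Real.cosh J * K0 / lam + 1) * ρ^(m+1) := by nlinarith [hρpow]
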